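/- Fix ε ∈ (0,1) and a real d > 1. There exist c > 0 and n₀ such that for every integer n ≥ n₀ and every subset L₁ ⊆ L with |L₁| ≤ (1−ε)·(log d/d)·n, the probability that the number of vertices v ∈ R having no neighbor in L₁ in G^{bip}_{n,d} is at least (1−ε)·d^{ε−1}·n is at least 1 − exp(−c·n). -/

import Mathlib

open MeasureTheory Real Filter

noncomputable section

/-- Bernoulli measure on `Bool` with success probability `p`. -/
def coin (p : ℝ) : Measure Bool :=
  ENNReal.ofReal p • Measure.dirac true + ENNReal.ofReal (1 - p) • Measure.dirac false

/-- The random bipartite graph `G^bip_{n,d}`, as a product (Bernoulli(d/n)) measure on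
edge-indicator vectors indexed by the `n * n` possible edges. -/
def edgeMeasure (n : ℕ) (d : ℝ) : Measure (Fin (n * n) → Bool) :=
  Measure.pi fun _ => coin (d / n)

/-- Vertex set: the left class `L` is `Sum.inl`, the right class `R` is `Sum.inr`. -/
abbrev Vtx (n : ℕ) := Fin n ⊕ Fin n

/-- Adjacency in the bipartite graph with edge-indicator vector `A`:
`i ∈ L` and `j ∈ R` are adjacent iff the indicator of the edge `(i,j)` is `true`. -/
def adjB (n : ℕ) (A : Fin (n * n) → Bool) : Vtx n → Vtx n → Prop
  | Sum.inl i, Sum.inr j => A (finProdFinEquiv (i, j)) = true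
  | Sum.inr j, Sum.inl i => A (finProdFinEquiv (i, j)) = true
  | _, _ => False

/-- `S` is an independent set of the bipartite graph encoded by `A`. -/
def IsIndepSet (n : ℕ) (A : Fin (n * n) → Bool) (S : Set (Vtx n)) : Prop :=
  ∀ u ∈ S, ∀ v ∈ S, ¬ adjB n A u v

/-- `S ∩ L`. -/
def leftPart {n : ℕ} (S : Set (Vtx n)) : Set (Vtx n) := S ∩ Set.range Sum.inl

/-- `S ∩ R`. -/
def rightPart {n : ℕ} (S : Set (Vtx n)) : Set (Vtx n) := S ∩ Set.range Sum.inr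

/-- `S` is `γ`-balanced: `| |S ∩ L| - γ|S| | < 1`. -/
def IsBalanced (γ : ℝ) {n : ℕ} (S : Set (Vtx n)) : Prop :=
  |((leftPart S).ncard : ℝ) - γ * (S.ncard : ℝ)| < 1

/-! ### Auxiliary lemmas -/

lemma coin_singleton (p : ℝ) (b : Bool) :
    coin p {b} = ENNReal.ofReal (if b then p else 1 - p) := by
  cases b <;>
    simp [coin, Measure.dirac_apply' _ (measurableSet_singleton _)]

instance (p : ℝ) : IsFiniteMeasure (coin p) := by
  constructor
  simp only [coin, Measure.coe_add, Measure.coe_smul, Pi.add_apply, Pi.smul_apply,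
    smul_eq_mul]
  exact ENNReal.add_lt_top.2 ⟨ENNReal.mul_lt_top ENNReal.ofReal_lt_top (by simp),
    ENNReal.mul_lt_top ENNReal.ofReal_lt_top (by simp)⟩

lemma measure_coe_finset (N : ℕ) (p : ℝ) (hp0 : 0 ≤ p) (hp1 : p ≤ 1)
    (T : Finset (Fin N → Bool)) :
    Measure.pi (fun _ : Fin N => coin p) ↑T
      = ENNReal.ofReal (∑ A ∈ T, ∏ e, (if A e then p else 1 - p)) := by
  have hw : ∀ b : Bool, 0 ≤ (if b then p else 1 - p) := by
    intro b; cases b <;> simp [hp0]; linarith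
  have hsingle : ∀ A : Fin N → Bool,
      Measure.pi (fun _ : Fin N => coin p) {A}
        = ENNReal.ofReal (∏ e, (if A e then p else 1 - p)) := by
    intro A
    rw [← Set.univ_pi_singleton A, Measure.pi_pi]
    rw [ENNReal.ofReal_prod_of_nonneg (fun i _ => hw (A i))]
    exact Finset.prod_congr rfl fun i _ => coin_singleton p (A i)
  have hT : (↑T : Set (Fin N → Bool)) = ⋃ A ∈ T, {A} := by ext x; simp
  rw [hT, measure_biUnion_finset ?_ (fun A _ => measurableSet_singleton A)]
  · rw [ENNReal.ofReal_sum_of_nonneg (fun A _ => Finset.prod_nonneg fun i _ => hw (A i))]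
    exact Finset.sum_congr rfl fun A _ => hsingle A
  · intro x _ y _ hxy
    simp [Function.onFun, Set.disjoint_singleton, hxy]

lemma sum_fun_prod {ι γ : Type*} [Fintype ι] [DecidableEq ι] [Fintype γ] (F : ι → γ → ℝ) :
    ∑ B : ι → γ, ∏ j, F j (B j) = ∏ j, ∑ g : γ, F j g :=
  (Fintype.prod_sum F).symm

lemma bernoulli_factor {κ : Type*} [Fintype κ] [DecidableEq κ] (P : Finset κ) (p e' : ℝ) :
    ∑ g : κ → Bool, (if ∀ i ∈ P, g i = false then e' else 1) * ∏ i, (if g i then p else 1 - p)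
      = 1 + (e' - 1) * (1 - p) ^ P.card := by
  classical
  have decomp : ∀ g : κ → Bool,
      (if ∀ i ∈ P, g i = false then e' else 1) * ∏ i, (if g i then p else 1 - p)
        = (∏ i, (if g i then p else 1 - p))
          + (e' - 1) * ∏ i, (if i ∈ P then (if g i then 0 else 1 - p)
              else (if g i then p else 1 - p)) := by
    intro g
    by_cases hg : ∀ i ∈ P, g i = false
    · have hprod : (∏ i, (if i ∈ P then (if g i then 0 else 1 - p)
          else (if g i then p else 1 - p)))
          = ∏ i, (if g i then p else 1 - p) := by
        refine Finset.prod_congr rfl fun i _ => ?_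
        by_cases hi : i ∈ P
        · simp [hi, hg i hi]
        · simp [hi]
      rw [hprod, if_pos hg]; ring
    · push_neg at hg
      obtain ⟨i₀, hi₀, hgi₀⟩ := hg
      have hgt : g i₀ = true := by simpa using hgi₀
      have hzero : (∏ i, (if i ∈ P then (if g i then 0 else 1 - p)
          else (if g i then p else 1 - p))) = 0 := by
        apply Finset.prod_eq_zero (Finset.mem_univ i₀)
        simp [hi₀, hgt]
      rw [hzero, if_neg (by push_neg; exact ⟨i₀, hi₀, hgi₀⟩)]; ring
  rw [Finset.sum_congr rfl fun g _ => decomp g, Finset.sum_add_distrib, ← Finset.mul_sum]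
  have hA := sum_fun_prod (fun (_ : κ) (b : Bool) => if b then p else 1 - p)
  have hB := sum_fun_prod (fun (i : κ) (b : Bool) =>
    if i ∈ P then (if b then 0 else 1 - p) else (if b then p else 1 - p))
  rw [hA, hB]
  have h1 : (∏ _i : κ, ∑ b : Bool, (if b then p else 1 - p)) = 1 := by
    simp [Fintype.sum_bool]
  have h2 : (∏ i : κ, ∑ b : Bool, (if i ∈ P then (if b then 0 else 1 - p)
      else (if b then p else 1 - p))) = (1 - p) ^ P.card := by
    have hco : ∀ i : κ, (∑ b : Bool, (if i ∈ P then (if b then 0 else 1 - p)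
        else (if b then p else 1 - p))) = if i ∈ P then 1 - p else 1 := by
      intro i; by_cases hi : i ∈ P <;> simp [hi, Fintype.sum_bool] <;> ring
    rw [Finset.prod_congr rfl fun i _ => hco i, Finset.prod_ite_mem, Finset.univ_inter,
      Finset.prod_const]
  rw [h1, h2]

lemma exp_neg_le_quad {s : ℝ} (hs : 0 ≤ s) : Real.exp (-s) ≤ 1 - s + s ^ 2 / 2 := by
  have h1 : 1 + s + s ^ 2 / 2 + s ^ 3 / 6 ≤ Real.exp s := by
    have h := Real.sum_le_exp_of_nonneg hs 4
    have hsum : ∑ i ∈ Finset.range 4, s ^ i / i.factorial = 1 + s + s ^ 2 / 2 + s ^ 3 / 6 := by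
      rw [Finset.sum_range_succ, Finset.sum_range_succ, Finset.sum_range_succ,
        Finset.sum_range_succ, Finset.sum_range_zero]
      norm_num [Nat.factorial]
    linarith [hsum ▸ h]
  have h3 : 0 < Real.exp s := Real.exp_pos s
  have h4 : Real.exp (-s) * Real.exp s = 1 := by
    rw [← Real.exp_add]; simp
  have hq : 0 ≤ 1 - s + s ^ 2 / 2 := by nlinarith [sq_nonneg (s - 1)]
  nlinarith [mul_le_mul_of_nonneg_left h1 hq, pow_nonneg hs 3, pow_nonneg hs 4, pow_nonneg hs 5]

set_option maxHeartbeats 1600000 in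
/-- Fix `ε ∈ (0,1)` and `d > 1`. There exist `c > 0` and `n₀` such that for
every `n ≥ n₀` and every `L₁ ⊆ L` with `|L₁| ≤ (1−ε)·(log d/d)·n`, the probability that the
number of vertices `v ∈ R` with no neighbor in `L₁` is at least `(1−ε)·d^{ε−1}·n` is at least
`1 − exp(−c·n)`. -/
theorem stmt13 (ε : ℝ) (hε0 : 0 < ε) (hε1 : ε < 1) (d : ℝ) (hd : 1 < d) :
    ∃ c : ℝ, 0 < c ∧ ∃ n₀ : ℕ, ∀ n : ℕ, n₀ ≤ n →
      ∀ L1 : Set (Fin n), (L1.ncard : ℝ) ≤ (1 - ε) * (Real.log d / d) * n →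
        ENNReal.ofReal (1 - Real.exp (-c * n)) ≤
          edgeMeasure n d
            {A | (1 - ε) * d ^ (ε - 1) * n ≤
              (Set.ncard {j : Fin n | ∀ i ∈ L1, A (finProdFinEquiv (i, j)) = false} : ℝ)} := by
  classical
  have hd0 : (0:ℝ) < d := lt_trans one_pos hd
  have hlogd : 0 < Real.log d := Real.log_pos hd
  set q₀ : ℝ := d ^ (ε - 1) with hq₀def
  have hq₀pos : 0 < q₀ := Real.rpow_pos_of_pos hd0 _
  refine ⟨q₀ * ε ^ 2 / 8, by positivity, ?_⟩
  set β : ℝ := -Real.log (1 - ε/4) with hβdef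
  have hβpos : 0 < β := by
    rw [hβdef, neg_pos]
    exact Real.log_neg (by linarith) (by linarith)
  have hev : ∀ᶠ n : ℕ in atTop,
      1 ≤ n ∧ d / (n:ℝ) ≤ 1/2 ∧ 2 * ((1-ε) * Real.log d) * d / (n:ℝ) ≤ β := by
    have t1 := tendsto_const_div_atTop_nhds_zero_nat d
    have t2 := tendsto_const_div_atTop_nhds_zero_nat (2 * ((1-ε) * Real.log d) * d)
    filter_upwards [eventually_ge_atTop 1,
      t1.eventually_le_const (show (0:ℝ) < 1/2 by norm_num),
      t2.eventually_le_const hβpos] with n h1 h2 h3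
    exact ⟨h1, h2, h3⟩
  obtain ⟨n₀, hn₀⟩ := eventually_atTop.mp hev
  refine ⟨n₀, fun n hn L1 hL1 => ?_⟩
  obtain ⟨hn1, hp2, hc3⟩ := hn₀ n hn
  have hn0R : (0:ℝ) < n := by exact_mod_cast Nat.lt_of_lt_of_le Nat.zero_lt_one hn1
  set p : ℝ := d / n with hpdef
  have hp0 : 0 < p := div_pos hd0 hn0R
  have h1p : (0:ℝ) < 1 - p := by linarith
  have h1p1 : 1 - p ≤ 1 := by linarith
  -- finite version of L1
  have hfin : L1.Finite := Set.toFinite L1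
  set L1F : Finset (Fin n) := hfin.toFinset with hL1Fdef
  have hmemF : ∀ i, i ∈ L1F ↔ i ∈ L1 := fun i => hfin.mem_toFinset
  set k := L1F.card with hkdef
  set q : ℝ := (1 - p) ^ k with hqdef
  have hq0 : 0 < q := pow_pos h1p k
  have hq1 : q ≤ 1 := pow_le_one₀ h1p.le h1p1
  -- lower bound on q
  have hqlb : (1 - ε/4) * q₀ ≤ q := by
    have hkK : (k:ℝ) ≤ (1-ε) * (Real.log d / d) * n := by
      rw [hkdef]
      rw [← Set.ncard_eq_toFinset_card L1 hfin]
      exact hL1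
    set K : ℝ := (1-ε) * (Real.log d / d) * n with hK
    have hK0 : 0 ≤ K := by
      apply mul_nonneg (mul_nonneg (by linarith) (by positivity)) hn0R.le
    have h1 : (1-p) ^ K ≤ (1-p) ^ (k:ℝ) :=
      Real.rpow_le_rpow_of_exponent_ge h1p h1p1 hkK
    have h2 : (1-p:ℝ) ^ (k:ℝ) = q := Real.rpow_natCast _ k
    have hlog : -(p/(1-p)) ≤ Real.log (1-p) := by
      have hlog1 := Real.log_le_sub_one_of_pos (inv_pos.2 h1p)
      rw [Real.log_inv] at hlog1
      have hinv : (1-p)⁻¹ - 1 = p / (1-p) := by field_simp; ring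
      linarith
    have hKp : K * p = (1-ε) * Real.log d := by
      rw [hK, hpdef]; field_simp
    have h3 : Real.exp (-((1-ε) * Real.log d / (1-p))) ≤ (1-p) ^ K := by
      rw [Real.rpow_def_of_pos h1p]
      apply Real.exp_le_exp.2
      have hmul : K * (-(p/(1-p))) ≤ K * Real.log (1-p) :=
        mul_le_mul_of_nonneg_left hlog hK0
      have heq : K * (-(p/(1-p))) = -((1-ε) * Real.log d / (1-p)) := by
        rw [← hKp]; field_simp
      rw [mul_comm (Real.log (1-p)) K]
      linarith
    have h4 : (1 - ε/4) * q₀ ≤ Real.exp (-((1-ε) * Real.log d / (1-p))) := by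
      have hq₀exp : q₀ = Real.exp (Real.log d * (ε-1)) := by
        rw [hq₀def, Real.rpow_def_of_pos hd0]
      have h14 : (1 - ε/4) = Real.exp (Real.log (1-ε/4)) :=
        (Real.exp_log (by linarith)).symm
      rw [hq₀exp, h14, ← Real.exp_add]
      apply Real.exp_le_exp.2
      have hfrac : p/(1-p) ≤ 2*p := by
        rw [div_le_iff₀ h1p]; nlinarith
      have hLd0 : 0 ≤ (1-ε) * Real.log d := mul_nonneg (by linarith) hlogd.le
      have hbound : (1-ε)*Real.log d * (p/(1-p)) ≤ β := by
        have h2p : (1-ε)*Real.log d * (2*p) ≤ β := by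
          have hpe : (1-ε)*Real.log d * (2*p) = 2 * ((1-ε) * Real.log d) * d / n := by
            rw [hpdef]; ring
          linarith [hpe ▸ hc3]
        have hmm := mul_le_mul_of_nonneg_left hfrac hLd0
        exact le_trans (by linarith) h2p
      have hcalc : (1-ε)*Real.log d / (1-p)
          = (1-ε)*Real.log d + (1-ε)*Real.log d * (p/(1-p)) := by
        field_simp; ring
      have hlogβ : Real.log (1-ε/4) = -β := by rw [hβdef]; ring
      rw [hlogβ, hcalc]
      nlinarith [hbound]
    calc (1 - ε/4) * q₀ ≤ Real.exp (-((1-ε) * Real.log d / (1-p))) := h4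
      _ ≤ (1-p) ^ K := h3
      _ ≤ (1-p) ^ (k:ℝ) := h1
      _ = q := h2
  -- notation for the Chernoff argument
  set s : ℝ := ε/2 with hsdef
  have hs0 : 0 < s := by rw [hsdef]; linarith
  set e' : ℝ := Real.exp (-s) with he'def
  have he'pos : 0 < e' := Real.exp_pos _
  have he'le1 : e' ≤ 1 := Real.exp_le_one_iff.2 (by linarith)
  set t : ℝ := (1-ε) * q₀ * n with htdef
  set X : (Fin (n*n) → Bool) → ℝ := fun A =>
    ((Finset.univ.filter fun j : Fin n =>
      ∀ i ∈ L1F, A (finProdFinEquiv (i,j)) = false).card : ℝ) with hXdef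
  set pred : (Fin (n*n) → Bool) → Prop := fun A => t ≤ X A with hpreddef
  -- rewrite the event set
  have hsetEq : {A : Fin (n*n) → Bool | t ≤
      (Set.ncard {j : Fin n | ∀ i ∈ L1, A (finProdFinEquiv (i,j)) = false} : ℝ)}
      = ↑(Finset.univ.filter pred) := by
    ext A
    have hset : {j : Fin n | ∀ i ∈ L1, A (finProdFinEquiv (i,j)) = false}
        = ↑(Finset.univ.filter fun j : Fin n =>
            ∀ i ∈ L1F, A (finProdFinEquiv (i,j)) = false) := by
      ext j; simp [hmemF]
    have hcardEq : (Set.ncard {j : Fin n | ∀ i ∈ L1, A (finProdFinEquiv (i,j)) = false} : ℝ)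
        = X A := by
      rw [hset, Set.ncard_coe_finset, hXdef]
    simp only [Set.mem_setOf_eq, Finset.coe_filter, Finset.mem_univ, true_and, hcardEq,
      hpreddef]
  rw [hsetEq]
  have hmeasEq : edgeMeasure n d ↑(Finset.univ.filter pred)
      = ENNReal.ofReal (∑ A ∈ Finset.univ.filter pred, ∏ e, (if A e then p else 1 - p)) :=
    measure_coe_finset (n*n) p hp0.le (by linarith) _
  rw [hmeasEq]
  apply ENNReal.ofReal_le_ofReal
  -- work with real sums now
  set W : (Fin (n*n) → Bool) → ℝ := fun A => ∏ e, (if A e then p else 1 - p) with hWdef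
  have hWnn : ∀ A, 0 ≤ W A := by
    intro A
    apply Finset.prod_nonneg
    intro e _
    by_cases hb : A e <;> simp [hb] <;> linarith
  have htotal : ∑ A : Fin (n*n) → Bool, W A = 1 := by
    rw [hWdef]
    rw [sum_fun_prod (fun (_ : Fin (n*n)) (b : Bool) => if b then p else 1 - p)]
    simp [Fintype.sum_bool]
  have hsplitsum := Finset.sum_filter_add_sum_filter_not Finset.univ pred W
  -- the key Chernoff bound
  have key : ∑ A ∈ Finset.univ.filter (fun A => ¬ pred A), W A
      ≤ Real.exp (-(q₀ * ε^2/8) * n) := by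
    -- step 1 : introduce the exponential weight
    have step1 : ∑ A ∈ Finset.univ.filter (fun A => ¬ pred A), W A
        ≤ ∑ A : Fin (n*n) → Bool, Real.exp (s * (t - X A)) * W A := by
      calc ∑ A ∈ Finset.univ.filter (fun A => ¬ pred A), W A
          ≤ ∑ A ∈ Finset.univ.filter (fun A => ¬ pred A),
              Real.exp (s * (t - X A)) * W A := by
            apply Finset.sum_le_sum
            intro A hA
            have hnp : ¬ pred A := (Finset.mem_filter.1 hA).2
            have hXA : X A < t := by
              simp only [hpreddef] at hnp; exact not_le.1 hnp
            exact le_mul_of_one_le_left (hWnn A)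
              (Real.one_le_exp (mul_nonneg hs0.le (by linarith)))
        _ ≤ ∑ A : Fin (n*n) → Bool, Real.exp (s * (t - X A)) * W A := by
            apply Finset.sum_le_sum_of_subset_of_nonneg (Finset.subset_univ _)
            intro A _ _
            exact mul_nonneg (Real.exp_pos _).le (hWnn A)
    -- step 2 : factorize each term
    have hterm : ∀ A : Fin (n*n) → Bool, Real.exp (s * (t - X A)) * W A
        = Real.exp (s*t) * ∏ j : Fin n,
            ((if ∀ i ∈ L1F, A (finProdFinEquiv (i,j)) = false then e' else 1)
              * ∏ i : Fin n, (if A (finProdFinEquiv (i,j)) then p else 1 - p)) := by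
      intro A
      have hX : X A = ∑ j : Fin n,
          (if ∀ i ∈ L1F, A (finProdFinEquiv (i,j)) = false then (1:ℝ) else 0) := by
        show ((Finset.univ.filter fun j : Fin n =>
          ∀ i ∈ L1F, A (finProdFinEquiv (i,j)) = false).card : ℝ) = _
        rw [Finset.card_filter]
        push_cast
        rfl
      have hexp : Real.exp (s * (t - X A)) = Real.exp (s*t)
          * ∏ j : Fin n,
            (if ∀ i ∈ L1F, A (finProdFinEquiv (i,j)) = false then e' else 1) := by
        rw [mul_sub, sub_eq_add_neg, Real.exp_add]
        congr 1
        calc Real.exp (-(s * X A))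
            = Real.exp (∑ j : Fin n,
                (if ∀ i ∈ L1F, A (finProdFinEquiv (i,j)) = false then -s else 0)) := by
              congr 1
              rw [hX, Finset.mul_sum, ← Finset.sum_neg_distrib]
              apply Finset.sum_congr rfl
              intro j _
              split_ifs <;> ring
          _ = ∏ j : Fin n, Real.exp
                (if ∀ i ∈ L1F, A (finProdFinEquiv (i,j)) = false then -s else 0) :=
              Real.exp_sum _ _
          _ = ∏ j : Fin n,
                (if ∀ i ∈ L1F, A (finProdFinEquiv (i,j)) = false then e' else 1) := by
              apply Finset.prod_congr rfl
              intro j _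
              split_ifs <;> simp [he'def]
      have hW : W A = ∏ j : Fin n, ∏ i : Fin n,
          (if A (finProdFinEquiv (i,j)) then p else 1 - p) := by
        show (∏ e : Fin (n*n), (if A e then p else 1 - p)) = _
        rw [← Equiv.prod_comp finProdFinEquiv
          (fun e : Fin (n*n) => if A e then p else 1 - p)]
        rw [Fintype.prod_prod_type]
        exact Finset.prod_comm
      rw [hexp, hW, mul_assoc, ← Finset.prod_mul_distrib]
    -- step 3 : change of variables
    have hchange : ∑ A : Fin (n*n) → Bool, ∏ j : Fin n,
        ((if ∀ i ∈ L1F, A (finProdFinEquiv (i,j)) = false then e' else 1)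
          * ∏ i : Fin n, (if A (finProdFinEquiv (i,j)) then p else 1 - p))
        = ∑ B : Fin n → Fin n → Bool, ∏ j : Fin n,
        ((if ∀ i ∈ L1F, B j i = false then e' else 1)
          * ∏ i : Fin n, (if B j i then p else 1 - p)) := by
      set Ψ : (Fin n → Fin n → Bool) ≃ (Fin (n*n) → Bool) :=
        (Equiv.curry (Fin n) (Fin n) Bool).symm.trans
          ((Equiv.arrowCongr (Equiv.prodComm (Fin n) (Fin n)) (Equiv.refl Bool)).trans
            (Equiv.arrowCongr finProdFinEquiv (Equiv.refl Bool))) with hΨdef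
      have hΨ : ∀ (B : Fin n → Fin n → Bool) (i j : Fin n),
          Ψ B (finProdFinEquiv (i,j)) = B j i := by
        intro B i j
        simp [hΨdef, Equiv.arrowCongr, Equiv.curry, Function.comp, Equiv.prodComm]
      rw [← Equiv.sum_comp Ψ (fun A : Fin (n*n) → Bool => ∏ j : Fin n,
        ((if ∀ i ∈ L1F, A (finProdFinEquiv (i,j)) = false then e' else 1)
          * ∏ i : Fin n, (if A (finProdFinEquiv (i,j)) then p else 1 - p)))]
      apply Finset.sum_congr rfl
      intro B _
      apply Finset.prod_congr rfl
      intro j _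
      simp only [hΨ]
    -- step 4 : factorize the sum over B
    have hfact : ∑ B : Fin n → Fin n → Bool, ∏ j : Fin n,
        ((if ∀ i ∈ L1F, B j i = false then e' else 1)
          * ∏ i : Fin n, (if B j i then p else 1 - p))
        = (1 + (e' - 1) * q) ^ n := by
      calc (∑ B : Fin n → Fin n → Bool, ∏ j : Fin n,
            ((if ∀ i ∈ L1F, B j i = false then e' else 1)
              * ∏ i : Fin n, (if B j i then p else 1 - p)))
          = ∏ _j : Fin n, ∑ g : Fin n → Bool,
              ((if ∀ i ∈ L1F, g i = false then e' else 1)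
                * ∏ i : Fin n, (if g i then p else 1 - p)) :=
            sum_fun_prod (fun (_ : Fin n) (g : Fin n → Bool) =>
              (if ∀ i ∈ L1F, g i = false then e' else 1)
                * ∏ i : Fin n, (if g i then p else 1 - p))
        _ = ∏ _j : Fin n, (1 + (e' - 1) * (1 - p) ^ L1F.card) := by
            refine Finset.prod_congr rfl fun j _ =>
              Eq.trans ?_ (bernoulli_factor L1F p e')
            refine Finset.sum_congr rfl fun g _ => ?_
            congr 1
            exact congrArg (fun h : Decidable (∀ i ∈ L1F, g i = false) =>
              @ite ℝ _ h e' 1) (Subsingleton.elim _ _)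
        _ = (1 + (e' - 1) * q) ^ n := by
            rw [Finset.prod_const, Finset.card_univ, Fintype.card_fin, ← hkdef, ← hqdef]
    -- step 5 : numeric estimate
    have hnum : Real.exp (s*t) * (1 + (e' - 1) * q) ^ n ≤ Real.exp (-(q₀ * ε^2/8) * n) := by
      have hBle : 1 + (e' - 1) * q ≤ Real.exp (-((1 - e') * q)) := by
        have hae := Real.add_one_le_exp (-((1 - e') * q))
        linarith
      have hB0 : 0 ≤ 1 + (e' - 1) * q := by nlinarith [he'pos, hq0.le, hq1]
      have hpow : (1 + (e' - 1) * q) ^ n ≤ Real.exp ((n:ℝ) * -((1 - e') * q)) := by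
        calc (1 + (e' - 1) * q) ^ n ≤ (Real.exp (-((1 - e') * q))) ^ n :=
              pow_le_pow_left₀ hB0 hBle n
          _ = Real.exp ((n:ℝ) * -((1 - e') * q)) := (Real.exp_nat_mul _ n).symm
      calc Real.exp (s*t) * (1 + (e' - 1) * q) ^ n
          ≤ Real.exp (s*t) * Real.exp ((n:ℝ) * -((1 - e') * q)) :=
            mul_le_mul_of_nonneg_left hpow (Real.exp_pos _).le
        _ = Real.exp (s*t + (n:ℝ) * -((1 - e') * q)) := (Real.exp_add _ _).symm
        _ ≤ Real.exp (-(q₀ * ε^2/8) * n) := by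
            apply Real.exp_le_exp.2
            have h1me : ε/2 - ε^2/8 ≤ 1 - e' := by
              have hquad := exp_neg_le_quad hs0.le
              rw [← he'def] at hquad
              rw [hsdef] at hquad
              nlinarith [hquad]
            have hcore : (ε/2 - ε^2/8) * ((1 - ε/4) * q₀) ≤ (1 - e') * q := by
              exact mul_le_mul h1me hqlb (mul_nonneg (by linarith) hq₀pos.le) (by linarith)
            have hmuln := mul_le_mul_of_nonneg_right hcore hn0R.le
            have hM2 : 0 ≤ q₀ * (n:ℝ) * ε^2 := by positivity
            have hM3 : 0 ≤ q₀ * (n:ℝ) * ε^3 := by positivity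
            rw [htdef, hsdef]
            nlinarith [hmuln, hM2, hM3]
    calc ∑ A ∈ Finset.univ.filter (fun A => ¬ pred A), W A
        ≤ ∑ A : Fin (n*n) → Bool, Real.exp (s * (t - X A)) * W A := step1
      _ = ∑ A : Fin (n*n) → Bool, Real.exp (s*t) * ∏ j : Fin n,
            ((if ∀ i ∈ L1F, A (finProdFinEquiv (i,j)) = false then e' else 1)
              * ∏ i : Fin n, (if A (finProdFinEquiv (i,j)) then p else 1 - p)) :=
          Finset.sum_congr rfl fun A _ => hterm A
      _ = Real.exp (s*t) * ∑ A : Fin (n*n) → Bool, ∏ j : Fin n,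
            ((if ∀ i ∈ L1F, A (finProdFinEquiv (i,j)) = false then e' else 1)
              * ∏ i : Fin n, (if A (finProdFinEquiv (i,j)) then p else 1 - p)) := by
          rw [Finset.mul_sum]
      _ = Real.exp (s*t) * (1 + (e' - 1) * q) ^ n := by rw [hchange, hfact]
      _ ≤ Real.exp (-(q₀ * ε^2/8) * n) := hnum
  -- conclude
  linarith [key, hsplitsum, htotal]
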